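/- Let M₀, M₁ be n×n complex matrices with M₀ᴴ·M₀ + M₁ᴴ·M₁ = I, and let E be a ℂ-linear map on the space of n×n complex matrices such that for every positive semidefinite matrix σ, E(σ) is positive semidefinite and the real part of trace(E σ) is at most the real part of trace(σ). Then for every positive semidefinite n×n matrix ρ, the family k ↦ M₀·((E ∘ C₁)^[k] ρ)·M₀ᴴ is summable (in the natural topology of the matrix space), where C₁(τ) := M₁·τ·M₁ᴴ and ^[k] denotes k-fold iteration. -/

import Mathlib

open Matrix ComplexOrder

lemma diag_re_nonneg' {n : ℕ} {A : Matrix (Fin n) (Fin n) ℂ} (hA : A.PosSemidef) (i : Fin n) :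
    0 ≤ (A i i).re := by
  have := hA.re_dotProduct_nonneg (Pi.single i 1)
  simpa [dotProduct, Pi.single_apply, apply_ite] using this

lemma trace_re_nonneg' {n : ℕ} {A : Matrix (Fin n) (Fin n) ℂ} (hA : A.PosSemidef) :
    0 ≤ A.trace.re := by
  rw [Matrix.trace, Complex.re_sum]
  exact Finset.sum_nonneg fun i _ => diag_re_nonneg' hA i

lemma diag_re_le_trace_re {n : ℕ} {A : Matrix (Fin n) (Fin n) ℂ} (hA : A.PosSemidef) (i : Fin n) :
    (A i i).re ≤ A.trace.re := by
  rw [Matrix.trace, Complex.re_sum]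
  exact Finset.single_le_sum (fun j _ => diag_re_nonneg' hA j) (Finset.mem_univ i)

lemma entry_norm_le_trace_re {n : ℕ} {A : Matrix (Fin n) (Fin n) ℂ} (hA : A.PosSemidef)
    (i j : Fin n) : ‖A i j‖ ≤ A.trace.re := by
  obtain ⟨B, rfl⟩ : ∃ B : Matrix (Fin n) (Fin n) ℂ, A = Bᴴ * B := by
    classical
    open scoped MatrixOrder in
    obtain ⟨X, hX, -, hXA⟩ :=
      CFC.exists_sqrt_of_isSelfAdjoint_of_quasispectrumRestricts hA.isHermitian
        (QuasispectrumRestricts.nnreal_of_nonneg hA.nonneg)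
    exact ⟨X, by rw [← Matrix.star_eq_conjTranspose, hX.star_eq, hXA]⟩
  have hdiag : ∀ l : Fin n, ((Bᴴ * B) l l).re = ∑ k, ‖B k l‖ ^ 2 := by
    intro l
    rw [Matrix.mul_apply, Complex.re_sum]
    congr 1; ext k
    rw [Matrix.conjTranspose_apply, Complex.star_def, ← Complex.normSq_eq_conj_mul_self,
      Complex.ofReal_re, ← Complex.sq_norm]
  calc ‖(Bᴴ * B) i j‖ ≤ ∑ k, ‖Bᴴ i k * B k j‖ := by
        rw [Matrix.mul_apply]; exact norm_sum_le _ _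
    _ ≤ ∑ k, (‖B k i‖ ^ 2 + ‖B k j‖ ^ 2) / 2 := by
        refine Finset.sum_le_sum fun k _ => ?_
        rw [norm_mul, Matrix.conjTranspose_apply, norm_star]
        nlinarith [sq_nonneg (‖B k i‖ - ‖B k j‖), norm_nonneg (B k i), norm_nonneg (B k j)]
    _ = (((Bᴴ * B) i i).re + ((Bᴴ * B) j j).re) / 2 := by
        rw [hdiag, hdiag, ← Finset.sum_add_distrib, ← Finset.sum_div]
    _ ≤ (Bᴴ * B).trace.re := by
        have h1 := diag_re_le_trace_re hA i
        have h2 := diag_re_le_trace_re hA j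
        linarith

theorem while_loop_summable {n : ℕ}
    (M₀ M₁ : Matrix (Fin n) (Fin n) ℂ)
    (hM : M₀ᴴ * M₀ + M₁ᴴ * M₁ = 1)
    (E : Matrix (Fin n) (Fin n) ℂ →ₗ[ℂ] Matrix (Fin n) (Fin n) ℂ)
    (hpos : ∀ σ : Matrix (Fin n) (Fin n) ℂ, σ.PosSemidef → (E σ).PosSemidef)
    (htr : ∀ σ : Matrix (Fin n) (Fin n) ℂ, σ.PosSemidef →
      ((E σ).trace).re ≤ (σ.trace).re)
    (ρ : Matrix (Fin n) (Fin n) ℂ) (hρ : ρ.PosSemidef) :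
    Summable (fun k : ℕ => M₀ * ((fun τ => E (M₁ * τ * M₁ᴴ))^[k] ρ) * M₀ᴴ) := by
  set F : Matrix (Fin n) (Fin n) ℂ → Matrix (Fin n) (Fin n) ℂ :=
    fun τ => E (M₁ * τ * M₁ᴴ) with hF
  have hσ : ∀ k, (F^[k] ρ).PosSemidef := by
    intro k
    induction k with
    | zero => simpa using hρ
    | succ k ih =>
      rw [Function.iterate_succ_apply']
      exact hpos _ (ih.mul_mul_conjTranspose_same M₁)
  set T : ℕ → Matrix (Fin n) (Fin n) ℂ := fun k => M₀ * F^[k] ρ * M₀ᴴ with hT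
  have hTpos : ∀ k, (T k).PosSemidef := fun k => (hσ k).mul_mul_conjTranspose_same M₀
  -- trace inequality along the iteration
  have key : ∀ k, (T k).trace.re + (F^[k + 1] ρ).trace.re ≤ (F^[k] ρ).trace.re := by
    intro k
    have h1 : (F^[k + 1] ρ).trace.re ≤ (M₁ * F^[k] ρ * M₁ᴴ).trace.re := by
      rw [Function.iterate_succ_apply']
      exact htr _ ((hσ k).mul_mul_conjTranspose_same M₁)
    have h2 : (T k).trace + (M₁ * F^[k] ρ * M₁ᴴ).trace = (F^[k] ρ).trace := by
      rw [hT]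
      rw [Matrix.trace_mul_cycle M₀ (F^[k] ρ) M₀ᴴ, Matrix.trace_mul_cycle M₁ (F^[k] ρ) M₁ᴴ,
        ← Matrix.trace_add, ← Matrix.add_mul, hM,
        Matrix.one_mul]
    have h3 : (T k).trace.re + (M₁ * F^[k] ρ * M₁ᴴ).trace.re = (F^[k] ρ).trace.re := by
      rw [← Complex.add_re, h2]
    linarith
  -- summability of the traces
  have hsum_tr : Summable fun k => (T k).trace.re := by
    apply summable_of_sum_range_le (c := ρ.trace.re)
      (fun k => trace_re_nonneg' (hTpos k))
    intro N
    have : ∀ N : ℕ, (∑ k ∈ Finset.range N, (T k).trace.re) + (F^[N] ρ).trace.re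
        ≤ ρ.trace.re := by
      intro N
      induction N with
      | zero => simp
      | succ N ih =>
        rw [Finset.sum_range_succ]
        have := key N
        linarith
    have h := this N
    have := trace_re_nonneg' (hσ N)
    linarith
  -- conclude entrywise
  have : Summable T := by
    refine Pi.summable.2 fun i => Pi.summable.2 fun j => ?_
    refine Summable.of_norm_bounded hsum_tr fun k => ?_
    exact entry_norm_le_trace_re (hTpos k) i j
  exact this
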